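/- If G is a finite group containing an involution x with C_G(x) = ⟨x⟩, then G has a Sylow 2-subgroup of order 2 and G is a Frobenius group with Frobenius complement ⟨x⟩ of order 2 and Frobenius kernel the normal 2-complement of G. -/

import Mathlib

/-- An abelian partition of a group `G`: a family of `n` pairwise disjoint sets covering `G`,
each of size at least 2 and consisting of pairwise commuting elements. -/
def IsAbelianPartition {G : Type*} [Group G] {n : ℕ} (A : Fin n → Set G) : Prop :=
  (∀ i, 2 ≤ (A i).ncard) ∧ (⋃ i, A i) = Set.univ ∧
    Pairwise (Function.onFun Disjoint A) ∧
    ∀ i, ∀ x ∈ A i, ∀ y ∈ A i, x * y = y * x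

/-- The minimal number of parts in an abelian partition of `G` (0 if none exists). -/
noncomputable def apDegree (G : Type*) [Group G] : ℕ :=
  sInf {n | ∃ A : Fin n → Set G, IsAbelianPartition A}

/-- The maximal size of a noncommuting subset of `G`. -/
noncomputable def maxNoncommuting (G : Type*) [Group G] : ℕ :=
  sSup {k | ∃ S : Set G, S.ncard = k ∧ ∀ x ∈ S, ∀ y ∈ S, x ≠ y → x * y ≠ y * x}

open Pointwise in
theorem self_centralizing_involution_frobenius
    {G : Type*} [Group G] [Finite G] (x : G)
    (hx1 : x ≠ 1) (hx2 : x * x = 1)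
    (hc : Subgroup.centralizer {x} = Subgroup.zpowers x) :
    (∃ P : Sylow 2 G, Nat.card P = 2) ∧
      (∀ g : G, g ∉ Subgroup.zpowers x →
        Subgroup.zpowers x ⊓ (MulAut.conj g • Subgroup.zpowers x) = ⊥) ∧
      ∃ N : Subgroup G, N.Normal ∧ Odd (Nat.card N) ∧
        Nat.card N * 2 = Nat.card G ∧
        N ⊓ Subgroup.zpowers x = ⊥ ∧ N ⊔ Subgroup.zpowers x = ⊤ := by
  haveI : Fact (Nat.Prime 2) := ⟨Nat.prime_two⟩
  have hord : orderOf x = 2 := orderOf_eq_prime (by rwa [pow_two]) hx1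
  have hx2' : x ^ (2 : ℤ) = 1 := by rw [zpow_two, hx2]
  -- every element of ⟨x⟩ is 1 or x
  have hmem : ∀ z ∈ Subgroup.zpowers x, z = 1 ∨ z = x := by
    intro z hz
    obtain ⟨k, hk⟩ := hz
    rcases Int.even_or_odd k with ⟨m, hm⟩ | ⟨m, hm⟩
    · left
      rw [← hk, hm, ← two_mul]
      show x ^ (2 * m) = 1
      rw [zpow_mul, hx2', one_zpow]
    · right
      rw [← hk, hm]
      show x ^ (2 * m + 1) = x
      rw [zpow_add, zpow_mul, hx2', one_zpow, one_mul, zpow_one]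
  have hcard : Nat.card (Subgroup.zpowers x) = 2 := by
    rw [Nat.card_zpowers, hord]
  -- membership in centralizer
  have hcent : ∀ g : G, g * x = x * g → g ∈ Subgroup.zpowers x := by
    intro g hg
    rw [← hc]
    exact Subgroup.mem_centralizer_iff.mpr (by rintro y rfl; exact hg.symm)
  -- a Sylow 2-subgroup containing ⟨x⟩
  obtain ⟨P, hle⟩ := (IsPGroup.of_card (by rw [hcard, pow_one])).exists_le_sylow (p := 2)
  have hxP : x ∈ (P : Subgroup G) := hle (Subgroup.mem_zpowers x)
  -- P = ⟨x⟩ using the center of P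
  have hPx : (P : Subgroup G) = Subgroup.zpowers x := by
    refine le_antisymm ?_ hle
    haveI : Nontrivial (P : Subgroup G) :=
      ⟨⟨⟨x, hxP⟩, 1, by simp [Subtype.ext_iff, hx1]⟩⟩
    haveI := P.2.center_nontrivial
    obtain ⟨z, hz⟩ := exists_ne (1 : Subgroup.center (P : Subgroup G))
    have hzc : ∀ p : (P : Subgroup G), p * (z : (P : Subgroup G)) = z * p := fun p =>
      (Subgroup.mem_center_iff.mp z.2 p)
    have hzx : ((z : (P : Subgroup G)) : G) = x := by
      have h1 : ((z : (P : Subgroup G)) : G) * x = x * ((z : (P : Subgroup G)) : G) := by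
        have := hzc ⟨x, hxP⟩
        exact (Subtype.ext_iff.mp this).symm
      rcases hmem _ (hcent _ h1) with h | h
      · exact absurd (by rw [Subtype.ext_iff, Subtype.ext_iff]; simpa using h) hz
      · exact h
    intro p hp
    apply hcent
    simpa [hzx] using Subtype.ext_iff.mp (hzc ⟨p, hp⟩)
  have hPcard : Nat.card (P : Subgroup G) = 2 := by rw [hPx]; exact hcard
  refine ⟨⟨P, hPcard⟩, ?_, ?_⟩
  · -- malnormality
    intro g hg
    rw [eq_bot_iff]
    intro y hy
    obtain ⟨hy1, hy2⟩ := Subgroup.mem_inf.mp hy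
    rw [Subgroup.mem_pointwise_smul_iff_inv_smul_mem] at hy2
    rcases hmem y hy1 with rfl | h1
    · exact Subgroup.mem_bot.mpr rfl
    · exfalso
      rw [h1] at hy2
      have hy2' : g⁻¹ * x * g ∈ Subgroup.zpowers x := by
        simpa [MulAut.smul_def, mul_assoc] using hy2
      rcases hmem _ hy2' with h | h
      · apply hx1
        calc x = g * (g⁻¹ * x * g) * g⁻¹ := by group
          _ = g * 1 * g⁻¹ := by rw [h]
          _ = 1 := by group
      · apply hg
        apply hcent
        have : g * (g⁻¹ * x * g) = g * x := by rw [h]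
        calc g * x = g * (g⁻¹ * x * g) := this.symm
          _ = x * g := by group
  · -- normal 2-complement via Burnside
    have hP : Subgroup.normalizer ((P : Subgroup G) : Set G) ≤ Subgroup.centralizer ((P : Subgroup G) : Set G) := by
      rw [hPx]
      intro g hg
      have hgx : g ∈ Subgroup.zpowers x := by
        have h1 : g * x * g⁻¹ ∈ Subgroup.zpowers x :=
          (Subgroup.mem_normalizer_iff.mp hg x).mp (Subgroup.mem_zpowers x)
        rcases hmem _ h1 with h | h
        · exfalso; apply hx1
          calc x = g⁻¹ * (g * x * g⁻¹) * g := by group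
            _ = g⁻¹ * 1 * g := by rw [h]
            _ = 1 := by group
        · apply hcent
          calc g * x = (g * x * g⁻¹) * g := by group
            _ = x * g := by rw [h]
      -- ⟨x⟩ is abelian so g centralizes it
      obtain ⟨a, rfl⟩ := hgx
      refine Subgroup.mem_centralizer_iff.mpr ?_
      rintro y hy
      obtain ⟨b, rfl⟩ := hy
      exact zpow_mul_comm x b a
    have hcompl := MonoidHom.ker_transferSylow_isComplement' P hP
    refine ⟨(MonoidHom.transferSylow P hP).ker, MonoidHom.normal_ker _, ?_, ?_, ?_, ?_⟩
    · rw [Nat.odd_iff, ← Nat.two_dvd_ne_zero]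
      exact MonoidHom.not_dvd_card_ker_transferSylow P hP
    · have := hcompl.card_mul
      rwa [hPcard] at this
    · rw [← hPx]
      exact disjoint_iff.mp hcompl.disjoint
    · rw [← hPx]
      exact hcompl.sup_eq_top
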